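/- arXiv:1704.08933 — 6 statements merged into one kernel-verified Lean document; each statement's English description precedes it below -/
import Mathlib

section
/- Let (γ(t))_{t≥0} be a stationary stochastic process with values in [ε,∞), ε > 0, and define m_eq(c) = k_in ∫₀^∞ E(exp(-∫₀ˢ γ(cu)du)) ds for k_in > 0. Then m_eq(c) ≥ k_in / E_π(γ) for every c ≥ 0. -/
open MeasureTheory Set Filter
open scoped ENNReal

/-- Enzymatic fluctuations always amplify the mean substrate abundance: for every
relative speed `c ≥ 0`, `m_eq(c) ≥ k_in / E_π(γ)`. -/
theorem meq_ge_det {Ω : Type*} [MeasurableSpace Ω]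
    (μ : Measure Ω) [IsProbabilityMeasure μ]
    (γ : ℝ → Ω → ℝ) (ε : ℝ) (hε : 0 < ε)
    (hmeas : Measurable (Function.uncurry γ))
    (hlb : ∀ t ω, ε ≤ γ t ω)
    (m : ℝ) (hstat : ∀ u : ℝ, ∫ ω, γ u ω ∂μ = m)
    (kin : ℝ) (hkin : 0 < kin)
    (meq : ℝ → ℝ)
    (hmeq : ∀ c, meq c =
      kin * ∫ s in Set.Ioi (0:ℝ), ∫ ω, Real.exp (-∫ u in (0:ℝ)..s, γ (c * u) ω) ∂μ) :
    ∀ c : ℝ, 0 ≤ c → kin / m ≤ meq c := by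
  intro c hc
  have hmeqnn : 0 ≤ meq c := by
    rw [hmeq]
    exact mul_nonneg hkin.le (integral_nonneg fun s =>
      integral_nonneg fun ω => (Real.exp_pos _).le)
  rcases le_or_gt m 0 with hm | hm
  · exact le_trans (div_nonpos_iff.mpr (Or.inl ⟨hkin.le, hm⟩)) hmeqnn
  -- main case
  have hInt : ∀ u : ℝ, Integrable (γ u) μ := by
    intro u
    by_contra h
    have := integral_undef h
    rw [hstat u] at this
    exact hm.ne' this
  have hγnn : ∀ t ω, (0:ℝ) ≤ γ t ω := fun t ω => hε.le.trans (hlb t ω)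
  have hεm : ε ≤ m := by
    have : ∫ (_ : Ω), ε ∂μ ≤ ∫ ω, γ 0 ω ∂μ :=
      integral_mono (integrable_const _) (hInt 0) (fun ω => hlb 0 ω)
    simpa [hstat 0] using this
  have hsecω : ∀ ω, Measurable fun t => γ t ω :=
    fun ω => hmeas.comp (measurable_id.prodMk measurable_const)
  have hsect : ∀ t, Measurable fun ω => γ t ω :=
    fun t => hmeas.comp (measurable_const.prodMk measurable_id)
  have hγm : ∀ u : ℝ, ∫⁻ ω, ENNReal.ofReal (γ u ω) ∂μ = ENNReal.ofReal m := by
    intro u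
    rw [← ofReal_integral_eq_lintegral_ofReal (hInt u) (ae_of_all _ fun ω => hγnn u ω),
      hstat u]
  set L : ℝ → Ω → ℝ≥0∞ :=
    fun s ω => ∫⁻ u in Ioc (0:ℝ) s, ENNReal.ofReal (γ (c*u) ω) with hL
  have hLmeas : Measurable (Function.uncurry L) := by
    have h1 : Measurable fun q : (ℝ × Ω) × ℝ =>
        (Ioc (0:ℝ) q.1.1).indicator (fun u => ENNReal.ofReal (γ (c*u) q.1.2)) q.2 := by
      have heq : (fun q : (ℝ × Ω) × ℝ =>
          (Ioc (0:ℝ) q.1.1).indicator (fun u => ENNReal.ofReal (γ (c*u) q.1.2)) q.2)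
          = fun q : (ℝ × Ω) × ℝ =>
            if 0 < q.2 ∧ q.2 ≤ q.1.1 then ENNReal.ofReal (γ (c*q.2) q.1.2) else 0 := by
        funext q
        simp [Set.indicator_apply, Set.mem_Ioc]
      rw [heq]
      refine Measurable.ite ?_ ?_ measurable_const
      · exact (measurableSet_lt (measurable_const) (measurable_snd)).inter
          (measurableSet_le measurable_snd (measurable_fst.comp measurable_fst))
      · exact ENNReal.measurable_ofReal.comp (hmeas.comp
          (((measurable_snd.const_mul c)).prodMk (measurable_snd.comp measurable_fst)))
    have h2 : Function.uncurry L = fun p : ℝ × Ω =>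
        ∫⁻ u, (Ioc (0:ℝ) p.1).indicator (fun u => ENNReal.ofReal (γ (c*u) p.2)) u := by
      funext p
      exact (lintegral_indicator measurableSet_Ioc _).symm
    rw [h2]
    exact Measurable.lintegral_prod_right' h1
  set X : ℝ → Ω → ℝ := fun s ω => (L s ω).toReal with hX
  have hXmeas : Measurable (Function.uncurry X) :=
    hLmeas.ennreal_toReal
  have hXsect : ∀ s, Measurable (X s) :=
    fun s => (hLmeas.comp (measurable_const.prodMk measurable_id)).ennreal_toReal
  -- interval integral equals X
  have hXeq : ∀ s : ℝ, 0 ≤ s → ∀ ω, (∫ u in (0:ℝ)..s, γ (c*u) ω) = X s ω := by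
    intro s hs ω
    rw [intervalIntegral.integral_of_le hs,
      integral_eq_lintegral_of_nonneg_ae (ae_of_all _ fun u => hγnn (c*u) ω)
        (((hsecω ω).comp (measurable_const_mul c)).aestronglyMeasurable)]
  -- total lintegral of L s
  have hLint : ∀ s : ℝ, ∫⁻ ω, L s ω ∂μ = ENNReal.ofReal m * ENNReal.ofReal (s - 0) := by
    intro s
    have hswap : ∫⁻ ω, ∫⁻ u in Ioc (0:ℝ) s, ENNReal.ofReal (γ (c*u) ω) ∂volume ∂μ
        = ∫⁻ u in Ioc (0:ℝ) s, ∫⁻ ω, ENNReal.ofReal (γ (c*u) ω) ∂μ ∂volume := by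
      apply lintegral_lintegral_swap
      exact (ENNReal.measurable_ofReal.comp (hmeas.comp
        ((measurable_snd.const_mul c).prodMk measurable_fst))).aemeasurable
    rw [hL]
    rw [hswap]
    rw [lintegral_congr (fun u => hγm (c*u)), lintegral_const, Measure.restrict_apply_univ,
      Real.volume_Ioc]
  have hLne : ∀ s : ℝ, ∫⁻ ω, L s ω ∂μ ≠ ⊤ := by
    intro s
    rw [hLint s]
    exact ENNReal.mul_ne_top ENNReal.ofReal_ne_top ENNReal.ofReal_ne_top
  -- E[X s] ≤ m * s
  have hEX : ∀ s : ℝ, 0 < s → ∫ ω, X s ω ∂μ ≤ m * s := by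
    intro s hs
    rw [integral_eq_lintegral_of_nonneg_ae (ae_of_all _ fun ω => ENNReal.toReal_nonneg)
      (hXsect s).aestronglyMeasurable]
    have h1 : ∫⁻ ω, ENNReal.ofReal (X s ω) ∂μ ≤ ENNReal.ofReal m * ENNReal.ofReal (s - 0) := by
      rw [← hLint s]
      exact lintegral_mono fun ω => ENNReal.ofReal_toReal_le
    calc (∫⁻ ω, ENNReal.ofReal (X s ω) ∂μ).toReal
        ≤ (ENNReal.ofReal m * ENNReal.ofReal (s - 0)).toReal :=
          ENNReal.toReal_mono (ENNReal.mul_ne_top ENNReal.ofReal_ne_top ENNReal.ofReal_ne_top) h1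
      _ = m * s := by
          rw [ENNReal.toReal_mul, ENNReal.toReal_ofReal hm.le,
            ENNReal.toReal_ofReal (by linarith), sub_zero]
  -- X s integrable
  have hXint : ∀ s : ℝ, 0 < s → Integrable (X s) μ := by
    intro s hs
    refine ⟨(hXsect s).aestronglyMeasurable, ?_⟩
    rw [HasFiniteIntegral]
    have : ∀ ω, ‖X s ω‖ₑ = ENNReal.ofReal (X s ω) :=
      fun ω => Real.enorm_eq_ofReal ENNReal.toReal_nonneg
    rw [lintegral_congr this]
    calc ∫⁻ ω, ENNReal.ofReal (X s ω) ∂μ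
        ≤ ∫⁻ ω, L s ω ∂μ := lintegral_mono fun ω => ENNReal.ofReal_toReal_le
      _ < ⊤ := lt_top_iff_ne_top.mpr (hLne s)
  -- lower bound per s : Jensen via tangent line
  have hElow : ∀ s : ℝ, 0 < s →
      Real.exp (-(m*s)) ≤ ∫ ω, Real.exp (-(X s ω)) ∂μ := by
    intro s hs
    have hexpint : Integrable (fun ω => Real.exp (-(X s ω))) μ := by
      refine Integrable.mono' (integrable_const 1)
        ((Real.measurable_exp.comp (hXsect s).neg).aestronglyMeasurable) ?_
      refine ae_of_all _ fun ω => ?_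
      rw [Real.norm_eq_abs, abs_of_pos (Real.exp_pos _)]
      exact Real.exp_le_one_iff.mpr (neg_nonpos.mpr ENNReal.toReal_nonneg)
    have htangent : ∀ ω, Real.exp (-(m*s)) * (1 + m*s - X s ω) ≤ Real.exp (-(X s ω)) := by
      intro ω
      have h1 : m*s - X s ω + 1 ≤ Real.exp (m*s - X s ω) := Real.add_one_le_exp _
      have h2 : Real.exp (m*s - X s ω)
          = Real.exp (m*s) * Real.exp (-(X s ω)) := by
        rw [← Real.exp_add]; ring_nf
      have h3 := mul_le_mul_of_nonneg_left (h2 ▸ h1) (Real.exp_pos (-(m*s))).le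
      calc Real.exp (-(m*s)) * (1 + m*s - X s ω)
          = Real.exp (-(m*s)) * (m*s - X s ω + 1) := by ring
        _ ≤ Real.exp (-(m*s)) * (Real.exp (m*s) * Real.exp (-(X s ω))) := h3
        _ = Real.exp (-(X s ω)) := by
            rw [← mul_assoc, ← Real.exp_add]; simp
    have hrint : Integrable (fun ω => Real.exp (-(m*s)) * (1 + m*s - X s ω)) μ :=
      (((integrable_const (1 + m*s)).sub (hXint s hs)).const_mul _)
    have := integral_mono hrint hexpint htangent
    calc Real.exp (-(m*s))
        = Real.exp (-(m*s)) * (1 + m*s - m*s) := by ring_nf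
      _ ≤ Real.exp (-(m*s)) * (1 + m*s - ∫ ω, X s ω ∂μ) := by
          have := hEX s hs
          nlinarith [Real.exp_pos (-(m*s))]
      _ = ∫ ω, Real.exp (-(m*s)) * (1 + m*s - X s ω) ∂μ := by
          rw [integral_const_mul, integral_sub (integrable_const _) (hXint s hs),
            integral_const]
          simp
      _ ≤ ∫ ω, Real.exp (-(X s ω)) ∂μ := this
  -- upper bound per s
  have hEup : ∀ s : ℝ, 0 < s →
      ∫ ω, Real.exp (-(X s ω)) ∂μ ≤ Real.exp (-(ε*s)) := by
    intro s hs
    have hLlb : ∀ ω, ENNReal.ofReal (ε*s) ≤ L s ω := by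
      intro ω
      have : ∫⁻ _ in Ioc (0:ℝ) s, ENNReal.ofReal ε ∂volume ≤ L s ω :=
        lintegral_mono fun u => ENNReal.ofReal_le_ofReal (hlb (c*u) ω)
      rwa [lintegral_const, Measure.restrict_apply_univ, Real.volume_Ioc, sub_zero,
        ← ENNReal.ofReal_mul hε.le] at this
    have hfin := ae_lt_top (hLmeas.comp (measurable_const.prodMk measurable_id)) (hLne s)
    have hbd : ∀ᵐ ω ∂μ, Real.exp (-(X s ω)) ≤ Real.exp (-(ε*s)) := by
      filter_upwards [hfin] with ω hω
      apply Real.exp_le_exp.mpr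
      apply neg_le_neg
      calc ε*s = (ENNReal.ofReal (ε*s)).toReal := by
            rw [ENNReal.toReal_ofReal (by positivity)]
        _ ≤ (L s ω).toReal := ENNReal.toReal_mono hω.ne (hLlb ω)
    have hexpint : Integrable (fun ω => Real.exp (-(X s ω))) μ := by
      refine Integrable.mono' (integrable_const 1)
        ((Real.measurable_exp.comp (hXsect s).neg).aestronglyMeasurable) ?_
      refine ae_of_all _ fun ω => ?_
      rw [Real.norm_eq_abs, abs_of_pos (Real.exp_pos _)]
      exact Real.exp_le_one_iff.mpr (neg_nonpos.mpr ENNReal.toReal_nonneg)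
    calc ∫ ω, Real.exp (-(X s ω)) ∂μ
        ≤ ∫ _, Real.exp (-(ε*s)) ∂μ := integral_mono_ae hexpint (integrable_const _) hbd
      _ = Real.exp (-(ε*s)) := by simp
  -- the function s ↦ ∫ ω, exp(-(X s ω))
  set F : ℝ → ℝ := fun s => ∫ ω, Real.exp (-(X s ω)) ∂μ with hF
  have hFmeas : StronglyMeasurable F := by
    have : StronglyMeasurable fun p : ℝ × Ω => Real.exp (-(X p.1 p.2)) :=
      (Real.measurable_exp.comp hXmeas.neg).stronglyMeasurable
    exact this.integral_prod_right'
  have hFnn : ∀ s, 0 ≤ F s := fun s => integral_nonneg fun ω => (Real.exp_pos _).le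
  have hgε : IntegrableOn (fun s : ℝ => Real.exp (-(ε*s))) (Ioi 0) := by
    simpa [neg_mul] using exp_neg_integrableOn_Ioi 0 hε
  have hFint : IntegrableOn F (Ioi 0) := by
    refine Integrable.mono' hgε hFmeas.aestronglyMeasurable.restrict ?_
    rw [ae_restrict_iff' measurableSet_Ioi]
    refine ae_of_all _ fun s hs => ?_
    rw [Real.norm_eq_abs, abs_of_nonneg (hFnn s)]
    exact hEup s hs
  -- ∫ s in Ioi 0, exp (-(m*s)) = 1/m
  have hexpmint : IntegrableOn (fun s : ℝ => Real.exp (-(m*s))) (Ioi 0) := by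
    simpa [neg_mul] using exp_neg_integrableOn_Ioi 0 hm
  have hval : ∫ s in Ioi (0:ℝ), Real.exp (-(m*s)) = 1/m := by
    have hderiv : ∀ x ∈ Ioi (0:ℝ),
        HasDerivAt (fun x : ℝ => -(Real.exp (-(m*x)) / m)) (Real.exp (-(m*x))) x := by
      intro x _
      have h1 : HasDerivAt (fun x : ℝ => -(m*x)) (-m) x := by
        simpa [Pi.neg_def] using ((hasDerivAt_id x).const_mul m).neg
      have h2 : HasDerivAt (fun x : ℝ => -(Real.exp (-(m*x)) / m))
          (-(Real.exp (-(m*x)) * -m / m)) x := (h1.exp.div_const m).neg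
      convert h2 using 1
      field_simp
    have htend : Tendsto (fun x : ℝ => -(Real.exp (-(m*x)) / m)) atTop (nhds 0) := by
      have h1 : Tendsto (fun x : ℝ => m*x) atTop atTop :=
        Tendsto.const_mul_atTop hm tendsto_id
      have h2 : Tendsto (fun x : ℝ => Real.exp (-(m*x))) atTop (nhds 0) :=
        Real.tendsto_exp_neg_atTop_nhds_zero.comp h1
      simpa using (h2.div_const m).neg
    have hcont : ContinuousWithinAt (fun x : ℝ => -(Real.exp (-(m*x)) / m)) (Ici 0) 0 := by
      exact (((Real.continuous_exp.comp ((continuous_const.mul continuous_id).neg)).div_const m).neg).continuousWithinAt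
    have := integral_Ioi_of_hasDerivAt_of_tendsto hcont hderiv hexpmint htend
    rw [this]
    simp [Real.exp_zero]
  -- put it together
  have hF_ge : 1/m ≤ ∫ s in Ioi (0:ℝ), F s := by
    rw [← hval]
    refine setIntegral_mono_on hexpmint hFint measurableSet_Ioi ?_
    intro s hs
    exact hElow s hs
  have hmeqF : meq c = kin * ∫ s in Ioi (0:ℝ), F s := by
    have hcg : ∀ s ∈ Ioi (0:ℝ),
        (∫ ω, Real.exp (-∫ u in (0:ℝ)..s, γ (c*u) ω) ∂μ) = F s := by
      intro s hs
      simp only [hF]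
      congr 1
      funext ω
      rw [hXeq s (le_of_lt hs) ω]
    rw [hmeq, setIntegral_congr_fun measurableSet_Ioi hcg]
  rw [hmeqF, div_eq_mul_inv, ← one_div]
  exact mul_le_mul_of_nonneg_left hF_ge hkin.le
end

section
/- Let (γ(t))_{t≥0} be a stationary ergodic process with values in [ε,∞), ε > 0, and mean E_π(γ). Then lim_{c→∞} ∫₀^∞ E(exp(-∫₀ˢ γ(cu)du)) ds = 1/E_π(γ). -/
open MeasureTheory Filter

/-- In the deterministic limit `c → ∞` (vanishing dynamic disorder), the steady-state
integral converges to `1/E_π(γ)`, the ergodic theorem providing a.s. convergence of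
time averages. -/
theorem meq_det_limit {Ω : Type*} [MeasurableSpace Ω]
    (μ : Measure Ω) [IsProbabilityMeasure μ]
    (γ : ℝ → Ω → ℝ) (ε : ℝ) (hε : 0 < ε)
    (hmeas : Measurable (Function.uncurry γ))
    (hlb : ∀ t ω, ε ≤ γ t ω)
    (m : ℝ) (hstat : ∀ u : ℝ, ∫ ω, γ u ω ∂μ = m)
    (hergodic : ∀ᵐ ω ∂μ,
      Tendsto (fun T : ℝ => (∫ u in (0:ℝ)..T, γ u ω) / T) atTop (nhds m)) :
    Tendsto (fun c : ℝ =>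
        ∫ s in Set.Ioi (0:ℝ), ∫ ω, Real.exp (-∫ u in (0:ℝ)..s, γ (c * u) ω) ∂μ)
      atTop (nhds m⁻¹) := by
  -- J is always nonnegative for s ≥ 0
  have hJnonneg : ∀ (c s : ℝ), 0 ≤ s → ∀ ω, 0 ≤ ∫ u in (0:ℝ)..s, γ (c * u) ω := by
    intro c s hs ω
    exact intervalIntegral.integral_nonneg hs (fun u _ => le_trans hε.le (hlb _ _))
  -- ω-measurability of the inner interval integral
  have hJsm : ∀ c s : ℝ, StronglyMeasurable (fun ω => ∫ u in (0:ℝ)..s, γ (c * u) ω) := by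
    intro c s
    have key : ∀ ν : Measure ℝ, SFinite ν →
        StronglyMeasurable (fun ω => ∫ u, γ (c * u) ω ∂ν) := by
      intro ν hν
      apply MeasureTheory.StronglyMeasurable.integral_prod_right (f := fun ω u => γ (c*u) ω)
      exact (hmeas.comp
        ((measurable_const.mul measurable_snd).prodMk measurable_fst)).stronglyMeasurable
    exact (key _ inferInstance).sub (key _ inferInstance)
  -- measurability of the integrand in ω for each c, s
  have hEsm : ∀ c s : ℝ, StronglyMeasurable
      (fun ω => Real.exp (-∫ u in (0:ℝ)..s, γ (c * u) ω)) := fun c s =>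
    (Real.continuous_exp.comp continuous_neg).comp_stronglyMeasurable (hJsm c s)
  -- inner integrand bounded by 1, hence integrable
  have hEint : ∀ c s : ℝ, 0 ≤ s →
      Integrable (fun ω => Real.exp (-∫ u in (0:ℝ)..s, γ (c * u) ω)) μ := by
    intro c s hs
    refine Integrable.mono' (integrable_const 1) (hEsm c s).aestronglyMeasurable ?_
    filter_upwards with ω
    rw [Real.norm_eq_abs, abs_of_pos (Real.exp_pos _)]
    exact Real.exp_le_one_iff.mpr (neg_nonpos.mpr (hJnonneg c s hs ω))
  -- s-a.e.-measurability of the outer integrand, for each c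
  have houterMeas : ∀ c : ℝ, AEStronglyMeasurable
      (fun s => ∫ ω, Real.exp (-∫ u in (0:ℝ)..s, γ (c * u) ω) ∂μ)
      (volume.restrict (Set.Ioi (0:ℝ))) := by
    intro c
    have m1 : Measurable (fun q : (ℝ × Ω) × ℝ => q.2) := measurable_snd
    have m2 : Measurable (fun q : (ℝ × Ω) × ℝ => q.1.1) := measurable_fst.comp measurable_fst
    have m3 : Measurable (fun q : (ℝ × Ω) × ℝ => q.1.2) := measurable_snd.comp measurable_fst
    have hF : StronglyMeasurable (fun q : (ℝ × Ω) × ℝ =>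
        (Set.Ioc (0:ℝ) q.1.1).indicator (fun u => γ (c * u) q.1.2) q.2) := by
      have : (fun q : (ℝ × Ω) × ℝ =>
          (Set.Ioc (0:ℝ) q.1.1).indicator (fun u => γ (c * u) q.1.2) q.2)
          = fun q : (ℝ × Ω) × ℝ =>
            ({q : (ℝ × Ω) × ℝ | 0 < q.2 ∧ q.2 ≤ q.1.1}).indicator
              (fun q => γ (c * q.2) q.1.2) q := by
        ext q
        by_cases h : 0 < q.2 ∧ q.2 ≤ q.1.1 <;>
          simp [Set.indicator, Set.mem_Ioc, h]
      rw [this]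
      refine Measurable.stronglyMeasurable (Measurable.indicator ?_ ?_)
      · exact hmeas.comp ((measurable_const.mul m1).prodMk m3)
      · exact (measurableSet_lt measurable_const m1).inter (measurableSet_le m1 m2)
    have hG : StronglyMeasurable (fun p : ℝ × Ω =>
        Real.exp (-∫ u, (Set.Ioc (0:ℝ) p.1).indicator (fun u => γ (c * u) p.2) u)) :=
      (Real.continuous_exp.comp continuous_neg).comp_stronglyMeasurable
        hF.integral_prod_right'
    have houter : StronglyMeasurable (fun s => ∫ ω,
        Real.exp (-∫ u, (Set.Ioc (0:ℝ) s).indicator (fun u => γ (c * u) ω) u) ∂μ) :=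
      hG.integral_prod_right'
    refine houter.aestronglyMeasurable.congr ?_
    filter_upwards [self_mem_ae_restrict measurableSet_Ioi] with s hs
    congr 1
    ext ω
    rw [intervalIntegral.integral_of_le hs.le, ← integral_indicator measurableSet_Ioc]
  rcases le_or_gt ε m with hεm | hmε
  · -- main case : m ≥ ε > 0
    have hm : 0 < m := lt_of_lt_of_le hε hεm
    -- good ω: ergodic limit and local integrability
    have hgood : ∀ᵐ ω ∂μ,
        Tendsto (fun T : ℝ => (∫ u in (0:ℝ)..T, γ u ω) / T) atTop (nhds m) ∧
        ∀ T : ℝ, 0 < T → IntervalIntegrable (fun u => γ u ω) volume 0 T := by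
      filter_upwards [hergodic] with ω hω
      refine ⟨hω, ?_⟩
      intro T hT
      by_contra hni
      have h0 : ∀ T' : ℝ, T ≤ T' → (∫ u in (0:ℝ)..T', γ u ω) = 0 := by
        intro T' hT'
        refine intervalIntegral.integral_undef (fun h => hni (h.mono_set ?_))
        rw [Set.uIcc_of_le hT.le, Set.uIcc_of_le (hT.le.trans hT')]
        exact Set.Icc_subset_Icc le_rfl hT'
      have : Tendsto (fun T : ℝ => (∫ u in (0:ℝ)..T, γ u ω) / T) atTop (nhds 0) := by
        refine Tendsto.congr' ?_ tendsto_const_nhds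
        filter_upwards [eventually_ge_atTop T] with T' hT'
        rw [h0 T' hT', zero_div]
      exact absurd (tendsto_nhds_unique hω this) hm.ne'
    -- pointwise limit of inner integrand
    have hJlim : ∀ᵐ ω ∂μ, ∀ s : ℝ, 0 < s →
        Tendsto (fun c : ℝ => ∫ u in (0:ℝ)..s, γ (c * u) ω) atTop (nhds (m * s)) := by
      filter_upwards [hgood] with ω hω s hs
      have h1 : Tendsto (fun c : ℝ =>
          s * ((∫ u in (0:ℝ)..(c * s), γ u ω) / (c * s))) atTop (nhds (s * m)) := by
        refine Tendsto.const_mul s (hω.1.comp ?_)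
        exact (tendsto_id.atTop_mul_const hs)
      rw [mul_comm s m] at h1
      refine Tendsto.congr' ?_ h1
      filter_upwards [eventually_gt_atTop (0:ℝ)] with c hc
      rw [intervalIntegral.integral_comp_mul_left (fun u => γ u ω) hc.ne']
      rw [mul_zero, smul_eq_mul]
      field_simp
    -- lower bound on J for good ω
    have hJlb : ∀ᵐ ω ∂μ, ∀ c s : ℝ, 0 < c → 0 < s →
        ε * s ≤ ∫ u in (0:ℝ)..s, γ (c * u) ω := by
      filter_upwards [hgood] with ω hω c s hc hs
      have hII : IntervalIntegrable (fun u => γ (c * u) ω) volume 0 s := by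
        have := (hω.2 (c * s) (by positivity)).comp_mul_left (c := c)
        simpa [hc.ne'] using this
      calc ε * s = ∫ _ in (0:ℝ)..s, ε := by simp [mul_comm]
        _ ≤ _ := intervalIntegral.integral_mono_on hs.le intervalIntegrable_const hII
            (fun u _ => hlb _ _)
    -- inner DCT: for each s > 0
    have hInner : ∀ s : ℝ, 0 < s →
        Tendsto (fun c : ℝ => ∫ ω, Real.exp (-∫ u in (0:ℝ)..s, γ (c * u) ω) ∂μ)
          atTop (nhds (Real.exp (-(m * s)))) := by
      intro s hs
      have H := MeasureTheory.tendsto_integral_filter_of_dominated_convergence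
        (μ := μ) (l := atTop)
        (F := fun c ω => Real.exp (-∫ u in (0:ℝ)..s, γ (c * u) ω))
        (f := fun _ => Real.exp (-(m * s)))
        (bound := fun _ => 1)
        (Eventually.of_forall fun c => (hEsm c s).aestronglyMeasurable)
        ?_ (integrable_const 1) ?_
      · simpa using H
      · filter_upwards with c
        filter_upwards with ω
        rw [Real.norm_eq_abs, abs_of_pos (Real.exp_pos _)]
        exact Real.exp_le_one_iff.mpr (neg_nonpos.mpr (hJnonneg c s hs.le ω))
      · filter_upwards [hJlim] with ω hω
        exact (Real.continuous_exp.tendsto _).comp ((hω s hs).neg)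
    -- outer DCT
    have hfinal := MeasureTheory.tendsto_integral_filter_of_dominated_convergence
      (μ := volume.restrict (Set.Ioi (0:ℝ))) (l := atTop)
      (F := fun c s => ∫ ω, Real.exp (-∫ u in (0:ℝ)..s, γ (c * u) ω) ∂μ)
      (f := fun s => Real.exp (-(m * s)))
      (bound := fun s => Real.exp (-(ε * s)))
      (Eventually.of_forall houterMeas)
      ?_ ?_ ?_
    · have : (∫ s in Set.Ioi (0:ℝ), Real.exp (-(m * s))) = m⁻¹ := by
        have := integral_comp_mul_left_Ioi (fun x => Real.exp (-x)) 0 hm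
        simp only [mul_zero] at this
        rw [this, integral_exp_neg_Ioi, neg_zero, Real.exp_zero, smul_eq_mul, mul_one]
      rwa [this] at hfinal
    · -- bound
      filter_upwards [eventually_gt_atTop (0:ℝ)] with c hc
      filter_upwards [self_mem_ae_restrict measurableSet_Ioi] with s hs
      rw [Real.norm_eq_abs, abs_of_nonneg (integral_nonneg (fun ω => (Real.exp_pos _).le))]
      calc (∫ ω, Real.exp (-∫ u in (0:ℝ)..s, γ (c * u) ω) ∂μ)
          ≤ ∫ _ : Ω, Real.exp (-(ε * s)) ∂μ := by
            refine integral_mono_ae (hEint c s hs.le) (integrable_const _) ?_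
            filter_upwards [hJlb] with ω hω
            exact Real.exp_le_exp.mpr (neg_le_neg (hω c s hc hs))
        _ = Real.exp (-(ε * s)) := by simp
    · -- bound integrable
      have := exp_neg_integrableOn_Ioi 0 hε
      refine this.congr_fun (fun s _ => by ring_nf) measurableSet_Ioi
    · -- a.e. limit
      filter_upwards [self_mem_ae_restrict measurableSet_Ioi] with s hs
      exact hInner s hs
  · -- degenerate case : m < ε forces m = 0 and junk integrals
    have hni0 : ¬ Integrable (fun ω => γ 0 ω) μ := by
      intro h
      have : ε ≤ ∫ ω, γ 0 ω ∂μ := by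
        calc ε = ∫ _ : Ω, ε ∂μ := by simp
          _ ≤ _ := integral_mono (integrable_const ε) h (fun ω => hlb 0 ω)
      rw [hstat 0] at this
      linarith
    have hm0 : m = 0 := (hstat 0).symm.trans (integral_undef hni0)
    subst hm0
    rw [inv_zero]
    -- a.e. every ω eventually fails local integrability
    have hbad : ∀ᵐ ω ∂μ, ∃ n : ℕ, ¬ IntervalIntegrable (fun u => γ u ω) volume 0 n := by
      filter_upwards [hergodic] with ω hω
      by_contra h
      push_neg at h
      have hII : ∀ T : ℝ, 0 < T → IntervalIntegrable (fun u => γ u ω) volume 0 T := by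
        intro T hT
        refine (h ⌈T⌉₊).mono_set ?_
        rw [Set.uIcc_of_le hT.le, Set.uIcc_of_le (by positivity)]
        exact Set.Icc_subset_Icc le_rfl (Nat.le_ceil T)
      have : ε ≤ (0:ℝ) := by
        refine ge_of_tendsto hω ?_
        filter_upwards [eventually_gt_atTop (0:ℝ)] with T hT
        rw [le_div_iff₀ hT]
        calc ε * T = ∫ _ in (0:ℝ)..T, ε := by simp [mul_comm]
          _ ≤ _ := intervalIntegral.integral_mono_on hT.le intervalIntegrable_const
              (hII T hT) (fun u _ => hlb _ _)
      linarith
    -- the bad sets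
    set A : ℕ → Set Ω := fun n => {ω | ¬ IntervalIntegrable (fun u => γ u ω) volume 0 n}
      with hA
    have hAmeas : ∀ n, MeasurableSet (A n) := by
      intro n
      have : MeasurableSet {ω | Integrable (fun u => γ u ω)
          (volume.restrict (Set.Ioc (0:ℝ) n))} := by
        apply measurableSet_integrable (f := fun ω u => γ u ω)
        exact (hmeas.comp (measurable_snd.prodMk measurable_fst)).stronglyMeasurable
      have heq : A n = {ω | Integrable (fun u => γ u ω)
          (volume.restrict (Set.Ioc (0:ℝ) n))}ᶜ := by
        ext ω
        simp only [hA, Set.mem_setOf_eq, Set.mem_compl_iff]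
        rw [intervalIntegrable_iff, Set.uIoc_of_le (by positivity : (0:ℝ) ≤ n)]
        rfl
      rw [heq]; exact this.compl
    have hAmono : Monotone A := by
      intro a b hab ω hω hint
      exact hω (hint.mono_set (by
        rw [Set.uIcc_of_le (by positivity : (0:ℝ) ≤ (a:ℝ)),
          Set.uIcc_of_le (by positivity : (0:ℝ) ≤ (b:ℝ))]
        exact Set.Icc_subset_Icc le_rfl (by exact_mod_cast hab)))
    have hUnion : μ (⋃ n, A n) = 1 := by
      have : (⋃ n, A n)ᶜ = {ω | ¬ ∃ n : ℕ, ¬ IntervalIntegrable (fun u => γ u ω) volume 0 n} := by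
        ext ω; simp [hA]
      have h0 : μ (⋃ n, A n)ᶜ = 0 := by
        rw [this, ← MeasureTheory.ae_iff]; exact hbad
      have := measure_congr (MeasureTheory.ae_eq_univ.2 h0)
      rw [this, measure_univ]
    have hTend : Tendsto (fun n => μ (A n)) atTop (nhds 1) := by
      rw [← hUnion]; exact tendsto_measure_iUnion_atTop hAmono
    obtain ⟨N, hN⟩ : ∃ N : ℕ, (1:ENNReal)/2 ≤ μ (A N) := by
      have := hTend.eventually_const_le (by norm_num : (1:ENNReal)/2 < 1)
      exact this.exists
    -- eventual vanishing of the outer integral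
    refine Tendsto.congr' ?_ (tendsto_const_nhds (α := ℝ))
    filter_upwards [eventually_ge_atTop (1:ℝ)] with c hc
    symm
    apply integral_undef
    intro hint
    -- the outer integrand is ≥ 1/2 on [N+1, ∞)
    have hlow : ∀ s : ℝ, (N:ℝ) + 1 ≤ s →
        (1:ℝ)/2 ≤ ∫ ω, Real.exp (-∫ u in (0:ℝ)..s, γ (c * u) ω) ∂μ := by
      intro s hsN
      have hs : (0:ℝ) < s := lt_of_lt_of_le (by positivity) hsN
      have hones : ∀ ω ∈ A N, Real.exp (-∫ u in (0:ℝ)..s, γ (c * u) ω) = 1 := by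
        intro ω hω
        have hni : ¬ IntervalIntegrable (fun u => γ (c * u) ω) volume 0 s := by
          intro hII
          apply hω
          have h2 := hII.comp_mul_left (c := c⁻¹)
          have hc0 : c ≠ 0 := by linarith
          have h3 : IntervalIntegrable (fun u => γ u ω) volume 0 (c * s) := by
            have heq : (fun x => γ (c * (c⁻¹ * x)) ω) = fun x => γ x ω := by
              ext x; rw [← mul_assoc, mul_inv_cancel₀ hc0, one_mul]
            have h2' : IntervalIntegrable (fun x => γ x ω) volume (0 / c⁻¹) (s / c⁻¹) := by
              rw [← heq]; exact h2
            rw [zero_div, div_eq_mul_inv, inv_inv, mul_comm] at h2'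
            exact h2'
          refine h3.mono_set ?_
          have hcs : (N:ℝ) ≤ c * s := by
            calc (N:ℝ) ≤ s := by linarith
              _ = 1 * s := (one_mul s).symm
              _ ≤ c * s := by nlinarith
          rw [Set.uIcc_of_le (by positivity : (0:ℝ) ≤ (N:ℝ)),
            Set.uIcc_of_le (by positivity : (0:ℝ) ≤ c * s)]
          exact Set.Icc_subset_Icc le_rfl hcs
        rw [intervalIntegral.integral_undef hni, neg_zero, Real.exp_zero]
      calc (1:ℝ)/2 ≤ (μ (A N)).toReal := by
            have h1 : ((1:ENNReal)/2).toReal ≤ (μ (A N)).toReal :=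
              ENNReal.toReal_mono (measure_ne_top μ _) hN
            simpa using h1
        _ = ∫ ω, (A N).indicator (fun _ => (1:ℝ)) ω ∂μ := by
            rw [integral_indicator (hAmeas N)]; simp [measureReal_def]
        _ ≤ ∫ ω, Real.exp (-∫ u in (0:ℝ)..s, γ (c * u) ω) ∂μ := by
            refine integral_mono ((integrable_const (1:ℝ)).indicator (hAmeas N))
              (hEint c s hs.le) ?_
            intro ω
            by_cases hω : ω ∈ A N
            · rw [Set.indicator_of_mem hω]
              exact (hones ω hω).ge
            · rw [Set.indicator_of_notMem hω]
              exact (Real.exp_pos _).le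
    -- contradiction: a function ≥ 1/2 on an infinite-measure set cannot be integrable
    have hint2 : IntegrableOn
        (fun s => ∫ ω, Real.exp (-∫ u in (0:ℝ)..s, γ (c * u) ω) ∂μ)
        (Set.Ici ((N:ℝ) + 1)) volume := by
      have hint' : IntegrableOn
          (fun s => ∫ ω, Real.exp (-∫ u in (0:ℝ)..s, γ (c * u) ω) ∂μ)
          (Set.Ioi (0:ℝ)) volume := hint
      refine hint'.mono_set ?_
      intro s hs
      exact lt_of_lt_of_le (by positivity : (0:ℝ) < (N:ℝ) + 1) hs
    have hconst : Integrable (fun _ : ℝ => (1:ℝ)/2)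
        (volume.restrict (Set.Ici ((N:ℝ) + 1))) := by
      refine Integrable.mono' hint2 aestronglyMeasurable_const ?_
      filter_upwards [self_mem_ae_restrict measurableSet_Ici] with s hs
      rw [Real.norm_eq_abs, abs_of_nonneg (by norm_num : (0:ℝ) ≤ 1/2)]
      exact hlow s hs
    rw [integrable_const_iff] at hconst
    rcases hconst with h | h
    · norm_num at h
    · have h := h.measure_univ_lt_top
      rw [Measure.restrict_apply_univ] at h
      simp [Real.volume_Ici] at h
end

section
/- Let Q be an irreducible n×n transition rate matrix with stationary distribution π, D = Diag(γ₁,...,γₙ) with γᵢ > 0, and c ≥ 0. Then πᵀ(D - cQ)⁻¹𝟙 ≤ πᵀD⁻¹𝟙, i.e., the steady-state mean m_eq(c) = k_in·πᵀ(D - cQ)⁻¹𝟙 is at most the static value k_in·Σᵢ πᵢ/γᵢ. -/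
open Matrix

def IsIrreducibleRateMatrix {n : ℕ} (Q : Matrix (Fin n) (Fin n) ℝ) : Prop :=
  ∀ S : Finset (Fin n), S.Nonempty → S ≠ Finset.univ → ∃ i ∈ S, ∃ j, j ∉ S ∧ Q i j ≠ 0

lemma quad_form_nonpos {n : ℕ} (Q : Matrix (Fin n) (Fin n) ℝ) (π x : Fin n → ℝ)
    (hoff : ∀ i j, i ≠ j → 0 ≤ Q i j) (hπ : ∀ i, 0 ≤ π i)
    (hrow : ∀ i, ∑ j, Q i j = 0) (hcol : ∀ j, ∑ i, π i * Q i j = 0) :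
    ∑ i, ∑ j, π i * Q i j * x i * x j ≤ 0 := by
  have h1 : ∑ i, ∑ j, π i * Q i j * x i ^ 2 = 0 := by
    have : ∀ i : Fin n, ∑ j, π i * Q i j * x i ^ 2 = π i * x i ^ 2 * ∑ j, Q i j := by
      intro i; rw [Finset.mul_sum]; exact Finset.sum_congr rfl fun j _ => by ring
    simp [this, hrow]
  have h2 : ∑ i, ∑ j, π i * Q i j * x j ^ 2 = 0 := by
    rw [Finset.sum_comm]
    have : ∀ j : Fin n, ∑ i, π i * Q i j * x j ^ 2 = (∑ i, π i * Q i j) * x j ^ 2 := by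
      intro j; rw [Finset.sum_mul]
    simp [this, hcol]
  have hsq : 0 ≤ ∑ i, ∑ j, π i * Q i j * (x i - x j) ^ 2 := by
    refine Finset.sum_nonneg fun i _ => Finset.sum_nonneg fun j _ => ?_
    rcases eq_or_ne i j with rfl | hij
    · simp
    · exact mul_nonneg (mul_nonneg (hπ i) (hoff i j hij)) (sq_nonneg _)
  have hexp : ∑ i, ∑ j, π i * Q i j * (x i - x j) ^ 2 =
      ∑ i, ∑ j, π i * Q i j * x i ^ 2 - 2 * ∑ i, ∑ j, π i * Q i j * x i * x j
        + ∑ i, ∑ j, π i * Q i j * x j ^ 2 := by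
    rw [Finset.mul_sum, ← Finset.sum_sub_distrib, ← Finset.sum_add_distrib]
    refine Finset.sum_congr rfl fun i _ => ?_
    rw [Finset.mul_sum, ← Finset.sum_sub_distrib, ← Finset.sum_add_distrib]
    exact Finset.sum_congr rfl fun j _ => by ring
  rw [hexp, h1, h2] at hsq
  linarith

/-- The steady-state mean is at most the static value:
`πᵀ(D - cQ)⁻¹𝟙 ≤ πᵀD⁻¹𝟙 = Σᵢ πᵢ/γᵢ`. -/
theorem meq_le_static {n : ℕ} (Q : Matrix (Fin n) (Fin n) ℝ) (γ π : Fin n → ℝ)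
    (hoff : ∀ i j, i ≠ j → 0 ≤ Q i j) (hrow : ∀ i, ∑ j, Q i j = 0)
    (hirr : IsIrreducibleRateMatrix Q) (hγ : ∀ i, 0 < γ i)
    (hπ : ∀ i, 0 ≤ π i) (hπsum : ∑ i, π i = 1)
    (hπstat : ∀ j, ∑ i, π i * Q i j = 0)
    (c : ℝ) (hc : 0 ≤ c) :
    π ⬝ᵥ ((Matrix.diagonal γ - c • Q)⁻¹ *ᵥ fun _ => 1) ≤ ∑ i, π i / γ i := by
  set A : Matrix (Fin n) (Fin n) ℝ := Matrix.diagonal γ - c • Q with hA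
  have hG : (0:ℝ) ≤ ∑ i, π i / γ i :=
    Finset.sum_nonneg fun i _ => div_nonneg (hπ i) (hγ i).le
  by_cases hdet : IsUnit A.det
  · set x : Fin n → ℝ := A⁻¹ *ᵥ (fun _ => 1) with hxdef
    have hAx : A *ᵥ x = fun _ => 1 := by
      rw [hxdef, Matrix.mulVec_mulVec, Matrix.mul_nonsing_inv _ hdet, Matrix.one_mulVec]
    have hx : ∀ i, γ i * x i - c * ∑ j, Q i j * x j = 1 := by
      intro i
      have h := congrFun hAx i
      simp only [hA, Matrix.sub_mulVec, Matrix.smul_mulVec, Pi.sub_apply,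
        Pi.smul_apply, smul_eq_mul, Matrix.mulVec_diagonal] at h
      simpa [Matrix.mulVec, dotProduct] using h
    set E : ℝ := ∑ i, π i * x i with hE
    set F : ℝ := ∑ i, γ i * π i * x i ^ 2 with hF
    set G : ℝ := ∑ i, π i / γ i with hGdef
    set S : ℝ := ∑ i, ∑ j, π i * Q i j * x i * x j with hS
    have hEFS : E = F - c * S := by
      rw [hE, hF, hS, Finset.mul_sum, ← Finset.sum_sub_distrib]
      refine Finset.sum_congr rfl fun i _ => ?_
      have h1 := hx i
      have h2 : ∑ j, π i * Q i j * x i * x j = π i * x i * ∑ j, Q i j * x j := by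
        rw [Finset.mul_sum]; exact Finset.sum_congr rfl fun j _ => by ring
      rw [h2]
      linear_combination (-(π i * x i)) * h1
    have hSle : S ≤ 0 := quad_form_nonpos Q π x hoff hπ hrow hπstat
    have hFE : F ≤ E := by
      have : 0 ≤ -(c * S) := by
        have := mul_nonneg hc (neg_nonneg.mpr hSle); linarith [this]
      linarith [hEFS]
    have hCS : E ^ 2 ≤ F * G := by
      have key := Finset.sum_mul_sq_le_sq_mul_sq Finset.univ
        (fun i => Real.sqrt (γ i * π i) * x i) (fun i => Real.sqrt (π i / γ i))
      have hfg : ∀ i : Fin n, (Real.sqrt (γ i * π i) * x i) * Real.sqrt (π i / γ i)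
          = π i * x i := by
        intro i
        have h1 : Real.sqrt (γ i * π i) * Real.sqrt (π i / γ i)
            = Real.sqrt ((γ i * π i) * (π i / γ i)) :=
          (Real.sqrt_mul (mul_nonneg (hγ i).le (hπ i)) _).symm
        have hne : γ i ≠ 0 := ne_of_gt (hγ i)
        have h2 : (γ i * π i) * (π i / γ i) = π i ^ 2 := by
          field_simp
        have h3 : Real.sqrt (π i ^ 2) = π i := by
          rw [Real.sqrt_sq (hπ i)]
        calc (Real.sqrt (γ i * π i) * x i) * Real.sqrt (π i / γ i)
            = (Real.sqrt (γ i * π i) * Real.sqrt (π i / γ i)) * x i := by ring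
          _ = π i * x i := by rw [h1, h2, h3]
      have hf2 : ∀ i : Fin n, (Real.sqrt (γ i * π i) * x i) ^ 2 = γ i * π i * x i ^ 2 := by
        intro i
        rw [mul_pow, Real.sq_sqrt (mul_nonneg (hγ i).le (hπ i))]
      have hg2 : ∀ i : Fin n, (Real.sqrt (π i / γ i)) ^ 2 = π i / γ i := by
        intro i
        rw [Real.sq_sqrt (div_nonneg (hπ i) (hγ i).le)]
      rw [Finset.sum_congr rfl fun i _ => hfg i, Finset.sum_congr rfl fun i _ => hf2 i,
        Finset.sum_congr rfl fun i _ => hg2 i] at key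
      exact key
    have hLHS : π ⬝ᵥ (A⁻¹ *ᵥ fun _ => 1) = E := rfl
    rw [hLHS]
    rcases le_or_gt E 0 with hE0 | hE0
    · linarith
    · nlinarith
  · rw [Matrix.nonsing_inv_apply_not_isUnit _ hdet]
    simpa using hG
end

section
/- Let Q be an irreducible n×n transition rate matrix with stationary distribution π, D = Diag(γ₁,...,γₙ) with γᵢ > 0. Then lim_{c→∞} πᵀ(D - cQ)⁻¹𝟙 = 1/(Σᵢ πᵢγᵢ) and πᵀ(D - 0·Q)⁻¹𝟙 = Σᵢ πᵢ/γᵢ. -/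
open Matrix Filter

private lemma row_shift {n : ℕ} {Q : Matrix (Fin n) (Fin n) ℝ}
    (hrow : ∀ i, ∑ j, Q i j = 0) (v : Fin n → ℝ) (i : Fin n) :
    ∑ j, Q i j * v j = ∑ j, Q i j * (v j - v i) := by
  simp [mul_sub, Finset.sum_sub_distrib, ← Finset.sum_mul, hrow i]

private lemma row_nonpos {n : ℕ} {Q : Matrix (Fin n) (Fin n) ℝ}
    (hoff : ∀ i j, i ≠ j → 0 ≤ Q i j) (hrow : ∀ i, ∑ j, Q i j = 0)
    (v : Fin n → ℝ) (i : Fin n) (hmax : ∀ j, v j ≤ v i) :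
    ∑ j, Q i j * v j ≤ 0 := by
  rw [row_shift hrow]
  apply Finset.sum_nonpos
  intro j _
  rcases eq_or_ne j i with rfl | hne
  · simp
  · exact mul_nonpos_of_nonneg_of_nonpos (hoff i j (Ne.symm hne)) (by linarith [hmax j])


/-- The two endpoints of the steady-state mean: the deterministic value as `c → ∞`
and the static value at `c = 0`. -/
theorem meq_endpoints {n : ℕ} (Q : Matrix (Fin n) (Fin n) ℝ) (γ π : Fin n → ℝ)
    (hoff : ∀ i j, i ≠ j → 0 ≤ Q i j) (hrow : ∀ i, ∑ j, Q i j = 0)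
    (hirr : IsIrreducibleRateMatrix Q) (hγ : ∀ i, 0 < γ i)
    (hπ : ∀ i, 0 ≤ π i) (hπsum : ∑ i, π i = 1)
    (hπstat : ∀ j, ∑ i, π i * Q i j = 0) :
    Tendsto (fun c : ℝ => π ⬝ᵥ ((Matrix.diagonal γ - c • Q)⁻¹ *ᵥ fun _ => 1))
        atTop (nhds (∑ i, π i * γ i)⁻¹) ∧
      π ⬝ᵥ ((Matrix.diagonal γ - (0:ℝ) • Q)⁻¹ *ᵥ fun _ => 1) = ∑ i, π i / γ i := by
  have hn : Nonempty (Fin n) := by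
    rcases Nat.eq_zero_or_pos n with h | h
    · subst h; simp at hπsum
    · exact Fin.pos_iff_nonempty.mp h
  -- entrywise formula for (diagonal γ - c • Q) *ᵥ v
  have hMV : ∀ (c : ℝ) (v : Fin n → ℝ) (i), ((Matrix.diagonal γ - c • Q) *ᵥ v) i
      = γ i * v i - c * ∑ j, Q i j * v j := by
    intro c v i
    rw [sub_mulVec]
    simp [mulVec_diagonal, smul_mulVec, mulVec, dotProduct, Finset.mul_sum,
      diagonal_apply, ite_mul, zero_mul, Finset.sum_ite_eq]
  -- invertibility for c ≥ 0
  have hunit : ∀ c : ℝ, 0 ≤ c → IsUnit (Matrix.diagonal γ - c • Q) := by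
    intro c hc
    rw [← Matrix.mulVec_injective_iff_isUnit]
    have key : ∀ v, (Matrix.diagonal γ - c • Q) *ᵥ v = 0 → ∀ j, v j ≤ 0 := by
      intro v hv
      obtain ⟨i, -, hi⟩ := Finset.exists_max_image Finset.univ v
        ⟨Classical.arbitrary _, Finset.mem_univ _⟩
      have hle : ∑ j, Q i j * v j ≤ 0 :=
        row_nonpos hoff hrow v i (fun j => hi j (Finset.mem_univ j))
      have h0 : γ i * v i - c * ∑ j, Q i j * v j = 0 := by
        rw [← hMV c v i, hv]; rfl
      have hvi : v i ≤ 0 := by nlinarith [hγ i]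
      intro j; exact le_trans (hi j (Finset.mem_univ j)) hvi
    intro u w huw
    have h1 : (Matrix.diagonal γ - c • Q) *ᵥ (u - w) = 0 := by
      rw [mulVec_sub, huw, sub_self]
    have h2 : (Matrix.diagonal γ - c • Q) *ᵥ (w - u) = 0 := by
      rw [mulVec_sub, huw, sub_self]
    funext j
    have := key _ h1 j
    have := key _ h2 j
    simp only [Pi.sub_apply] at *
    linarith
  have hsolve : ∀ c : ℝ, 0 ≤ c →
      (Matrix.diagonal γ - c • Q) *ᵥ ((Matrix.diagonal γ - c • Q)⁻¹ *ᵥ fun _ => 1)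
        = fun _ => (1:ℝ) := by
    intro c hc
    rw [mulVec_mulVec,
      Matrix.mul_nonsing_inv _ ((Matrix.isUnit_iff_isUnit_det _).mp (hunit c hc)),
      one_mulVec]
  set x : ℝ → Fin n → ℝ := fun c => (Matrix.diagonal γ - c • Q)⁻¹ *ᵥ fun _ => 1 with hxdef
  have hcomp : ∀ c : ℝ, 0 ≤ c → ∀ i, γ i * x c i - c * ∑ j, Q i j * x c j = 1 := by
    intro c hc i
    rw [← hMV c (x c) i, hsolve c hc]
  -- bounds
  set B : ℝ := ∑ k, (γ k)⁻¹ with hBdef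
  have hBle : ∀ i, (γ i)⁻¹ ≤ B :=
    fun i => Finset.single_le_sum (f := fun k => (γ k)⁻¹)
      (fun k _ => le_of_lt (inv_pos.mpr (hγ k))) (Finset.mem_univ i)
  have hxbound : ∀ c : ℝ, 0 ≤ c → ∀ j, 0 ≤ x c j ∧ x c j ≤ B := by
    intro c hc
    obtain ⟨i, -, hi⟩ := Finset.exists_max_image Finset.univ (x c)
      ⟨Classical.arbitrary _, Finset.mem_univ _⟩
    obtain ⟨i', -, hi'⟩ := Finset.exists_max_image Finset.univ (fun j => - x c j)
      ⟨Classical.arbitrary _, Finset.mem_univ _⟩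
    have hup : ∀ j, x c j ≤ B := by
      have hle : ∑ j, Q i j * x c j ≤ 0 :=
        row_nonpos hoff hrow (x c) i (fun j => hi j (Finset.mem_univ j))
      have h1 := hcomp c hc i
      have h2 : γ i * x c i ≤ 1 := by nlinarith
      have h3 : x c i ≤ (γ i)⁻¹ := by
        rw [← one_div]
        exact (le_div_iff₀ (hγ i)).mpr (by linarith [mul_comm (γ i) (x c i)])
      intro j
      exact le_trans (hi j (Finset.mem_univ j)) (le_trans h3 (hBle i))
    have hlo : ∀ j, 0 ≤ x c j := by
      have hle : ∑ j, Q i' j * (- x c j) ≤ 0 :=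
        row_nonpos hoff hrow (fun j => - x c j) i' (fun j => hi' j (Finset.mem_univ j))
      have hle' : 0 ≤ ∑ j, Q i' j * x c j := by
        have : ∑ j, Q i' j * (- x c j) = - ∑ j, Q i' j * x c j := by
          simp [Finset.sum_neg_distrib]
        linarith
      have h1 := hcomp c hc i'
      have h2 : 1 ≤ γ i' * x c i' := by nlinarith
      have h3 : 0 < x c i' := by nlinarith [hγ i']
      intro j
      have := hi' j (Finset.mem_univ j)
      linarith
    exact fun j => ⟨hlo j, hup j⟩
  -- stationarity of π
  have hvecMul : π ᵥ* Q = 0 := by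
    funext j
    simp [vecMul, dotProduct, hπstat j]
  have hstatQ : ∀ v : Fin n → ℝ, π ⬝ᵥ (Q *ᵥ v) = 0 := by
    intro v
    rw [dotProduct_mulVec, hvecMul, zero_dotProduct]
  have hsum1 : ∀ c : ℝ, 0 ≤ c → ∑ j, π j * γ j * x c j = 1 := by
    intro c hc
    have h1 : π ⬝ᵥ ((Matrix.diagonal γ - c • Q) *ᵥ x c) = 1 := by
      rw [hsolve c hc]; simp [dotProduct, hπsum]
    have h2 : π ⬝ᵥ ((Matrix.diagonal γ - c • Q) *ᵥ x c)
        = π ⬝ᵥ (Matrix.diagonal γ *ᵥ x c) - c * (π ⬝ᵥ (Q *ᵥ x c)) := by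
      rw [sub_mulVec, dotProduct_sub, smul_mulVec, dotProduct_smul, smul_eq_mul]
    rw [h2, hstatQ] at h1
    have h3 : π ⬝ᵥ (Matrix.diagonal γ *ᵥ x c) = ∑ j, π j * γ j * x c j := by
      simp [dotProduct, mulVec_diagonal, mul_assoc]
    rw [h3] at h1
    linarith
  -- kernel of Q is spanned by constants
  have hker : ∀ v : Fin n → ℝ, Q *ᵥ v = 0 → ∃ m, ∀ j, v j = m := by
    intro v hv
    obtain ⟨i0, -, hi0⟩ := Finset.exists_max_image Finset.univ v
      ⟨Classical.arbitrary _, Finset.mem_univ _⟩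
    refine ⟨v i0, fun j => ?_⟩
    by_contra hj
    set S : Finset (Fin n) := Finset.univ.filter (fun k => v k = v i0) with hS
    have hSne : S.Nonempty := ⟨i0, by simp [hS]⟩
    have hSd : S ≠ Finset.univ := by
      intro h
      have hjS : j ∈ S := by rw [h]; exact Finset.mem_univ j
      exact hj (Finset.mem_filter.mp hjS).2
    obtain ⟨i, hiS, k, hkS, hQ⟩ := hirr S hSne hSd
    have hvi : v i = v i0 := (Finset.mem_filter.mp hiS).2
    have hvk : v k < v i0 :=
      lt_of_le_of_ne (hi0 k (Finset.mem_univ k))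
        (fun h => hkS (Finset.mem_filter.mpr ⟨Finset.mem_univ _, h⟩))
    have hik : i ≠ k := fun h => hkS (h ▸ hiS)
    have hQpos : 0 < Q i k := lt_of_le_of_ne (hoff i k hik) (Ne.symm hQ)
    have hs : ∑ l, Q i l * (v l - v i) < 0 := by
      have h := Finset.sum_lt_sum (s := Finset.univ)
        (f := fun l => Q i l * (v l - v i)) (g := fun _ => (0:ℝ)) ?_ ?_
      · simpa using h
      · intro l _
        rcases eq_or_ne l i with rfl | h'
        · simp
        · exact mul_nonpos_of_nonneg_of_nonpos (hoff i l (Ne.symm h'))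
            (by rw [hvi]; linarith [hi0 l (Finset.mem_univ l)])
      · exact ⟨k, Finset.mem_univ k,
          mul_neg_of_pos_of_neg hQpos (by rw [hvi]; linarith)⟩
    have h0 : ∑ l, Q i l * v l = 0 := by
      have := congrFun hv i
      simpa [mulVec, dotProduct] using this
    rw [row_shift hrow] at h0
    linarith
  -- the auxiliary invertible matrix A
  set A : Matrix (Fin n) (Fin n) ℝ := Q + Matrix.of (fun _ j => π j * γ j) with hAdef
  have hA_mv : ∀ (v : Fin n → ℝ) (i), (A *ᵥ v) i = (Q *ᵥ v) i + ∑ j, π j * γ j * v j := by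
    intro v i
    rw [hAdef, add_mulVec]
    simp [mulVec, dotProduct, Matrix.of_apply, mul_assoc]
  have hsumπγpos : 0 < ∑ j, π j * γ j := by
    have hex : ∃ j, 0 < π j := by
      by_contra h
      push_neg at h
      have hz : ∀ j, π j = 0 := fun j => le_antisymm (h j) (hπ j)
      simp [hz] at hπsum
    obtain ⟨j0, hj0⟩ := hex
    exact Finset.sum_pos' (fun j _ => mul_nonneg (hπ j) (le_of_lt (hγ j)))
      ⟨j0, Finset.mem_univ _, mul_pos hj0 (hγ j0)⟩
  have hAunit : IsUnit A := by
    rw [← Matrix.mulVec_injective_iff_isUnit]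
    have key : ∀ v, A *ᵥ v = 0 → v = 0 := by
      intro v hv
      have hs0 : ∑ j, π j * γ j * v j = 0 := by
        have h1 : π ⬝ᵥ (A *ᵥ v) = 0 := by rw [hv]; simp
        have h2 : π ⬝ᵥ (A *ᵥ v)
            = π ⬝ᵥ (Q *ᵥ v) + (∑ i, π i) * (∑ j, π j * γ j * v j) := by
          simp only [dotProduct, hA_mv, mul_add, Finset.sum_add_distrib, Finset.sum_mul]
        rw [h2, hstatQ, hπsum] at h1
        linarith
      have hQv : Q *ᵥ v = 0 := by
        funext i
        have h3 := hA_mv v i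
        rw [hv, hs0] at h3
        simpa using h3.symm
      obtain ⟨m, hm⟩ := hker v hQv
      have hmz : m * (∑ j, π j * γ j) = 0 := by
        rw [← hs0, Finset.mul_sum]
        exact Finset.sum_congr rfl (fun j _ => by rw [hm j]; ring)
      have hm0 : m = 0 := by
        rcases mul_eq_zero.mp hmz with h | h
        · exact h
        · exact absurd h (ne_of_gt hsumπγpos)
      funext j
      simp [hm j, hm0]
    intro uu ww huw
    have h4 := key (uu - ww) (by rw [mulVec_sub, huw, sub_self])
    exact sub_eq_zero.mp h4
  have hAinvA : A⁻¹ * A = 1 :=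
    Matrix.nonsing_inv_mul _ ((Matrix.isUnit_iff_isUnit_det _).mp hAunit)
  have hxid : ∀ c : ℝ, 0 ≤ c → x c = A⁻¹ *ᵥ (Q *ᵥ x c + fun _ => 1) := by
    intro c hc
    have h1 : A *ᵥ x c = Q *ᵥ x c + fun _ => 1 := by
      funext i
      rw [hA_mv, hsum1 c hc]
      simp
    rw [← h1, mulVec_mulVec, hAinvA, one_mulVec]
  set α : ℝ := (∑ j, π j * γ j)⁻¹ with hα
  have hAconst : A *ᵥ (fun _ => α) = fun _ => 1 := by
    funext i
    rw [hA_mv]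
    have h1 : (Q *ᵥ fun _ => α) i = 0 := by
      simp [mulVec, dotProduct, ← Finset.sum_mul, hrow i]
    rw [h1, zero_add, ← Finset.sum_mul, hα, mul_inv_cancel₀ (ne_of_gt hsumπγpos)]
  have hAinv1 : A⁻¹ *ᵥ (fun _ => (1:ℝ)) = fun _ => α := by
    rw [← hAconst, mulVec_mulVec, hAinvA, one_mulVec]
  -- components of Q *ᵥ x c tend to zero
  have hQx0 : ∀ i, Tendsto (fun c => (Q *ᵥ x c) i) atTop (nhds 0) := by
    intro i
    apply squeeze_zero_norm' (a := fun c => (γ i * B + 1) / c)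
    · filter_upwards [eventually_ge_atTop (1:ℝ)] with c hc
      have hc0 : (0:ℝ) ≤ c := by linarith
      have hcpos : (0:ℝ) < c := by linarith
      have h1 := hcomp c hc0 i
      have hb := hxbound c hc0 i
      have h2 : (Q *ᵥ x c) i = ∑ j, Q i j * x c j := by simp [mulVec, dotProduct]
      have h3 : (Q *ᵥ x c) i = (γ i * x c i - 1) / c := by
        rw [h2, eq_div_iff (ne_of_gt hcpos)]
        linarith
      rw [h3, Real.norm_eq_abs, abs_div, abs_of_pos hcpos]
      have habs : |γ i * x c i - 1| ≤ γ i * B + 1 := by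
        rw [abs_le]
        constructor <;> nlinarith [hγ i, hb.1, hb.2]
      gcongr
    · exact Filter.Tendsto.const_div_atTop tendsto_id _
  set u : Fin n → ℝ := π ᵥ* A⁻¹ with hu
  have husum : ∑ j, u j * ((0:ℝ) + 1) = α := by
    have h1 : ∑ j, u j * ((0:ℝ) + 1) = u ⬝ᵥ (fun _ => (1:ℝ)) := by
      simp [dotProduct]
    rw [h1, hu, ← dotProduct_mulVec, hAinv1]
    simp [dotProduct, ← Finset.sum_mul, hπsum]
  constructor
  · have hcongr : ∀ᶠ c : ℝ in atTop,
        ∑ j, u j * ((Q *ᵥ x c) j + 1)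
          = π ⬝ᵥ ((Matrix.diagonal γ - c • Q)⁻¹ *ᵥ fun _ => 1) := by
      filter_upwards [eventually_ge_atTop (0:ℝ)] with c hc
      have hx : ((Matrix.diagonal γ - c • Q)⁻¹ *ᵥ fun _ => (1:ℝ)) = x c := by
        rw [hxdef]
      rw [hx]
      calc ∑ j, u j * ((Q *ᵥ x c) j + 1)
          = u ⬝ᵥ (Q *ᵥ x c + fun _ => 1) := by simp [dotProduct]
        _ = π ⬝ᵥ (A⁻¹ *ᵥ (Q *ᵥ x c + fun _ => 1)) := by rw [hu, dotProduct_mulVec]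
        _ = π ⬝ᵥ x c := by rw [← hxid c hc]
    have hT : Tendsto (fun c : ℝ => ∑ j, u j * ((Q *ᵥ x c) j + 1)) atTop
        (nhds (∑ j, u j * ((0:ℝ) + 1))) := by
      apply tendsto_finset_sum
      intro j _
      exact ((hQx0 j).add tendsto_const_nhds).const_mul (u j)
    rw [husum] at hT
    exact Tendsto.congr' hcongr hT
  · simp only [zero_smul, sub_zero]
    have hdinv : (Matrix.diagonal γ)⁻¹ = Matrix.diagonal (fun i => (γ i)⁻¹) := by
      apply Matrix.inv_eq_right_inv
      rw [diagonal_mul_diagonal]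
      have h5 : (fun i => γ i * (γ i)⁻¹) = fun _ => (1:ℝ) :=
        funext fun i => mul_inv_cancel₀ (ne_of_gt (hγ i))
      rw [h5, diagonal_one]
    rw [hdinv]
    simp [dotProduct, mulVec_diagonal, div_eq_mul_inv]
end

section
/- For the two-state enzyme model with rates k_in, γ₀, γ₁, k_on, k_off > 0, the steady-state substrate mean at relative speed c, given by m_eq(c) = k_in·πᵀ(D - cQ)⁻¹𝟙 with D = Diag(γ₀,γ₁), Q = [[-k_on,k_on],[k_off,-k_off]], π = (k_off, k_on)/(k_on+k_off), equals k_in·(γ₁k_off + γ₀k_on + c(k_on+k_off)²) / ((γ₀γ₁ + cγ₀k_off + cγ₁k_on)(k_on+k_off)). -/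
open Matrix

/-- Closed form for the steady-state substrate mean of the two-state enzyme model:
`m_eq(c) = k_in πᵀ(D - cQ)⁻¹𝟙`. -/
theorem two_state_meq (kin γ0 γ1 kon koff c : ℝ)
    (hkin : 0 < kin) (h0 : 0 < γ0) (h1 : 0 < γ1)
    (hon : 0 < kon) (hoff : 0 < koff) (hc : 0 ≤ c) :
    kin * (![koff / (kon + koff), kon / (kon + koff)] ⬝ᵥ
        ((Matrix.diagonal ![γ0, γ1]
            - c • Matrix.of ![![-kon, kon], ![koff, -koff]])⁻¹ *ᵥ fun _ => 1))
      = kin * (γ1 * koff + γ0 * kon + c * (kon + koff) ^ 2)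
          / ((γ0 * γ1 + c * γ0 * koff + c * γ1 * kon) * (kon + koff)) := by
  have hD : Matrix.diagonal ![γ0, γ1] = Matrix.of ![![γ0, 0], ![0, γ1]] := by
    ext i j
    fin_cases i <;> fin_cases j <;> simp [Matrix.diagonal]
  rw [hD]
  set A : Matrix (Fin 2) (Fin 2) ℝ :=
    Matrix.of ![![γ0, 0], ![0, γ1]] - c • Matrix.of ![![-kon, kon], ![koff, -koff]] with hA
  have hdet : A.det = γ0 * γ1 + c * γ0 * koff + c * γ1 * kon := by
    simp [hA, Matrix.det_fin_two]
    ring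
  have hdetpos : 0 < γ0 * γ1 + c * γ0 * koff + c * γ1 * kon := by positivity
  have hinv : A⁻¹ = A.det⁻¹ • A.adjugate := by
    rw [Matrix.inv_def, Ring.inverse_eq_inv']
  have hsum : kon + koff ≠ 0 := by positivity
  rw [hinv, hdet]
  simp [Matrix.adjugate_fin_two, Matrix.mulVec, dotProduct, Fin.sum_univ_two, hA]
  field_simp
  ring
end

section
/- For the two-state enzyme model, the maximum relative amplification factor ρ_max := m_eq^(static)/m_eq^(det) - 1 equals k_on·k_off·(γ₀-γ₁)²/((k_on+k_off)²·γ₀γ₁), which equals Var_π(γ)/(γ₀γ₁). -/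
/-- The maximum relative amplification factor for the two-state enzyme model:
`ρ_max = m_static/m_det - 1 = k_on k_off (γ₀-γ₁)²/((k_on+k_off)² γ₀γ₁) = Var_π(γ)/(γ₀γ₁)`. -/
theorem two_state_rho_max (kin γ0 γ1 kon koff : ℝ)
    (hkin : 0 < kin) (h0 : 0 < γ0) (h1 : 0 < γ1)
    (hon : 0 < kon) (hoff : 0 < koff) :
    let mdet := kin * (kon + koff) / (γ0 * koff + γ1 * kon)
    let mstatic := kin * (γ1 * koff + γ0 * kon) / (γ0 * γ1 * (kon + koff))
    let varγ := kon * koff * (γ0 - γ1) ^ 2 / (kon + koff) ^ 2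
    mstatic / mdet - 1 = kon * koff * (γ0 - γ1) ^ 2 / ((kon + koff) ^ 2 * (γ0 * γ1)) ∧
      mstatic / mdet - 1 = varγ / (γ0 * γ1) := by
  intro mdet mstatic varγ
  have h : mstatic / mdet - 1 = kon * koff * (γ0 - γ1) ^ 2 / ((kon + koff) ^ 2 * (γ0 * γ1)) := by
    simp only [mstatic, mdet, varγ]
    have hs : 0 < kon + koff := by linarith
    have hd : 0 < γ0 * koff + γ1 * kon := by positivity
    field_simp
    ring
  exact ⟨h, by rw [h]; simp only [varγ]; rw [div_div]⟩
end
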